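/- Let P and Q be positive joint distributions on 𝒳 × 𝒴. Then any minimizer P* of min{ D(P̃‖Q) : P̃ a joint distribution with P̃_X = P_X and P̃_Y = P_Y } (whose value is E(P‖Q)) is positive, satisfies P* ∈ ℰ^{xy}(Q), and obeys the Pythagorean identity D(P‖Q) = D(P‖P*) + D(P*‖Q). Similarly, any minimizer Q* of min{ D(Q̃‖P) : Q̃ a joint distribution with Q̃_X = Q_X and Q̃_Y = Q_Y } is positive, satisfies Q* ∈ ℰ^{xy}(P), and obeys D(Q‖P) = D(Q‖Q*) + D(Q*‖P). -/

import Mathlib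

open scoped Classical BigOperators

noncomputable section

variable {X Y : Type*} [Fintype X] [Fintype Y]

/-- `P` is a joint distribution on `X × Y`. -/
def IsDist (P : X × Y → ℝ) : Prop :=
  (∀ z, 0 ≤ P z) ∧ ∑ z : X × Y, P z = 1

/-- `P` is a positive joint distribution on `X × Y`. -/
def IsPos (P : X × Y → ℝ) : Prop :=
  (∀ z, 0 < P z) ∧ ∑ z : X × Y, P z = 1

/-- The first marginal of a joint distribution. -/
def margX (P : X × Y → ℝ) (x : X) : ℝ := ∑ y : Y, P (x, y)

/-- The second marginal of a joint distribution. -/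
def margY (P : X × Y → ℝ) (y : Y) : ℝ := ∑ x : X, P (x, y)

/-- Relative entropy `D(P‖Q)` (natural log; `Real.log 0 = 0` realizes `0·log 0 = 0`). -/
def relEnt (P Q : X × Y → ℝ) : ℝ := ∑ z : X × Y, P z * Real.log (P z / Q z)

/-- Projected relative entropy `E(P‖Q)`. -/
def projE (P Q : X × Y → ℝ) : ℝ :=
  sInf { d : ℝ | ∃ P' : X × Y → ℝ,
    IsDist P' ∧ margX P' = margX P ∧ margY P' = margY P ∧ d = relEnt P' Q }

/-- `R ∈ ℰ^{xy}(S)` : `R` has the same correlation coordinates as `S`. -/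
def SameCorr (R S : X × Y → ℝ) : Prop :=
  ∃ a1 : X → ℝ, ∃ a2 : Y → ℝ,
    ∀ x : X, ∀ y : Y, Real.log (R (x, y) / S (x, y)) = a1 x + a2 y

/-- The type (empirical distribution) of a sequence. -/
def empDist {n : ℕ} (x : Fin n → X) (a : X) : ℝ :=
  ((Finset.univ.filter fun i => x i = a).card : ℝ) / n

/-- The joint type of a pair of sequences. -/
def empJoint {n : ℕ} (x : Fin n → X) (y : Fin n → Y) (z : X × Y) : ℝ :=
  ((Finset.univ.filter fun i => x i = z.1 ∧ y i = z.2).card : ℝ) / n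

/-- Probability of a set under the `n`-fold i.i.d. product of `P`. -/
def prodProb (P : X × Y → ℝ) (n : ℕ) (A : Set ((Fin n → X) × (Fin n → Y))) : ℝ :=
  ∑ z : (Fin n → X) × (Fin n → Y),
    if z ∈ A then ∏ i : Fin n, P (z.1 i, z.2 i) else 0

/-- `P` is a joint type with denominator `n` (an element of `𝒫ₙ(𝒳 × 𝒴)`). -/
def IsTypeN (n : ℕ) (P : X × Y → ℝ) : Prop :=
  IsDist P ∧ ∀ z : X × Y, ∃ k : ℕ, P z = (k : ℝ) / n

/-- `Eₙ(P̄‖Q)` : projected relative entropy restricted to joint types. -/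
def En (n : ℕ) (Pbar Q : X × Y → ℝ) : ℝ :=
  sInf { d : ℝ | ∃ Pt : X × Y → ℝ,
    IsTypeN n Pt ∧ margX Pt = margX Pbar ∧ margY Pt = margY Pbar ∧ d = relEnt Pt Q }

/-- Standard normal cumulative distribution function `Φ`. -/
def stdNormalCDF (t : ℝ) : ℝ :=
  ∫ u in Set.Iic t, (Real.sqrt (2 * Real.pi))⁻¹ * Real.exp (-(u ^ 2) / 2)

/-- Inverse of the standard normal CDF, `Φ⁻¹`. -/
def stdNormalCDFInv (e : ℝ) : ℝ := Function.invFun stdNormalCDF e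

-- basic lemmas
lemma term_lb {q u : ℝ} (hq : 0 < q) (hu : 0 ≤ u) : u - q ≤ u * Real.log (u / q) := by
  rcases eq_or_lt_of_le hu with h | h
  · simp [← h]; linarith
  · have h1 : Real.log (q / u) ≤ q / u - 1 := Real.log_le_sub_one_of_pos (by positivity)
    have h2 : Real.log (q / u) = - Real.log (u / q) := by
      rw [← Real.log_inv]; congr 1; field_simp
    have h3 : u * (q / u) = q := by field_simp
    nlinarith
lemma relEnt_nonneg {P' Q : X × Y → ℝ} (hP' : IsDist P') (hQ : IsPos Q) :
    0 ≤ relEnt P' Q := by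
  have : ∑ z : X × Y, (P' z - Q z) ≤ relEnt P' Q :=
    Finset.sum_le_sum fun z _ => term_lb (hQ.1 z) (hP'.1 z)
  rw [Finset.sum_sub_distrib, hP'.2, hQ.2] at this
  linarith
lemma projE_le {P Q P' : X × Y → ℝ} (hQ : IsPos Q) (hP' : IsDist P')
    (hX : margX P' = margX P) (hY : margY P' = margY P) :
    projE P Q ≤ relEnt P' Q := by
  apply csInf_le
  · exact ⟨0, fun d ⟨R, hR, _, _, hd⟩ => hd ▸ relEnt_nonneg hR hQ⟩
  · exact ⟨P', hP', hX, hY, rfl⟩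
lemma mul_log_div {x q : ℝ} (hx : 0 ≤ x) (hq : 0 < q) :
    x * Real.log (x / q) = x * Real.log x - x * Real.log q := by
  rcases eq_or_lt_of_le hx with h | h
  · simp [← h]
  · rw [Real.log_div h.ne' hq.ne']; ring
lemma convex_ineq {a b q t : ℝ} (ha : 0 ≤ a) (hb : 0 ≤ b) (hq : 0 < q)
    (ht0 : 0 ≤ t) (ht1 : t ≤ 1) :
    ((1-t)*a + t*b) * Real.log (((1-t)*a + t*b) / q)
      ≤ (1-t) * (a * Real.log (a / q)) + t * (b * Real.log (b / q)) := by
  have hu : 0 ≤ (1-t)*a + t*b := by nlinarith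
  have hc := Real.convexOn_mul_log.2 (Set.mem_Ici.2 ha) (Set.mem_Ici.2 hb)
    (by linarith : (0:ℝ) ≤ 1 - t) ht0 (by ring)
  simp only [smul_eq_mul] at hc
  rw [mul_log_div hu hq, mul_log_div ha hq, mul_log_div hb hq]
  nlinarith [hc]
lemma minimizer_pos {P Q Ps : X × Y → ℝ} (hP : IsPos P) (hQ : IsPos Q)
    (hPs : IsDist Ps) (hmX : margX Ps = margX P) (hmY : margY Ps = margY P)
    (hmin : relEnt Ps Q = projE P Q) : IsPos Ps := by
  refine ⟨?_, hPs.2⟩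
  by_contra hc
  push_neg at hc
  obtain ⟨z0, hz0'⟩ := hc
  have hz0 : Ps z0 = 0 := le_antisymm hz0' (hPs.1 z0)
  have hPz0 : 0 < P z0 := hP.1 z0
  have hQz0 : 0 < Q z0 := hQ.1 z0
  set L0 : ℝ := Real.log (P z0 / Q z0) with hL0
  set C : ℝ := ∑ z ∈ Finset.univ.erase z0,
      (P z * Real.log (P z / Q z) - Ps z * Real.log (Ps z / Q z)) with hC
  set t : ℝ := min (1/2) (Real.exp (-(C + P z0 * L0 + 1) / P z0)) with htdef
  have ht0 : 0 < t := lt_min (by norm_num) (Real.exp_pos _)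
  have ht1 : t ≤ 1/2 := min_le_left _ _
  have hlogt : P z0 * Real.log t ≤ -(C + P z0 * L0 + 1) := by
    have h1 : Real.log t ≤ -(C + P z0 * L0 + 1) / P z0 := by
      calc Real.log t ≤ Real.log (Real.exp (-(C + P z0 * L0 + 1) / P z0)) :=
            Real.log_le_log ht0 (min_le_right _ _)
        _ = -(C + P z0 * L0 + 1) / P z0 := Real.log_exp _
    calc P z0 * Real.log t ≤ P z0 * (-(C + P z0 * L0 + 1) / P z0) := by
          exact mul_le_mul_of_nonneg_left h1 hPz0.le
      _ = -(C + P z0 * L0 + 1) := by field_simp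
  set Pt : X × Y → ℝ := fun z => (1 - t) * Ps z + t * P z with hPtdef
  have hPtnn : ∀ z, 0 ≤ Pt z := fun z =>
    add_nonneg (mul_nonneg (by linarith) (hPs.1 z)) (mul_nonneg ht0.le (hP.1 z).le)
  have hPtdist : IsDist Pt := by
    refine ⟨hPtnn, ?_⟩
    simp only [hPtdef, Finset.sum_add_distrib, ← Finset.mul_sum, hPs.2, hP.2]
    ring
  have hPtX : margX Pt = margX P := by
    funext a
    simp only [margX, hPtdef, Finset.sum_add_distrib, ← Finset.mul_sum]
    have h1 : ∑ y : Y, Ps (a, y) = margX Ps a := rfl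
    have h2 : ∑ y : Y, P (a, y) = margX P a := rfl
    rw [h1, h2, hmX]; ring
  have hPtY : margY Pt = margY P := by
    funext b
    simp only [margY, hPtdef, Finset.sum_add_distrib, ← Finset.mul_sum]
    have h1 : ∑ x : X, Ps (x, b) = margY Ps b := rfl
    have h2 : ∑ x : X, P (x, b) = margY P b := rfl
    rw [h1, h2, hmY]; ring
  have hge : relEnt Ps Q ≤ relEnt Pt Q := hmin ▸ projE_le hQ hPtdist hPtX hPtY
  -- now show relEnt Pt Q < relEnt Ps Q
  have hz0mem : z0 ∈ (Finset.univ : Finset (X × Y)) := Finset.mem_univ _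
  have hsplitPs : relEnt Ps Q = Ps z0 * Real.log (Ps z0 / Q z0)
      + ∑ z ∈ Finset.univ.erase z0, Ps z * Real.log (Ps z / Q z) :=
    (Finset.add_sum_erase _ _ hz0mem).symm
  have hsplitPt : relEnt Pt Q = Pt z0 * Real.log (Pt z0 / Q z0)
      + ∑ z ∈ Finset.univ.erase z0, Pt z * Real.log (Pt z / Q z) :=
    (Finset.add_sum_erase _ _ hz0mem).symm
  have hterm0 : Pt z0 * Real.log (Pt z0 / Q z0) = t * (P z0 * Real.log t + P z0 * L0) := by
    have h1 : Pt z0 = t * P z0 := by simp [hPtdef, hz0]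
    have h2 : t * P z0 / Q z0 = t * (P z0 / Q z0) := by ring
    rw [h1, h2, Real.log_mul ht0.ne' (div_pos hPz0 hQz0).ne', ← hL0]
    ring
  have hrest : ∑ z ∈ Finset.univ.erase z0, Pt z * Real.log (Pt z / Q z)
      ≤ (∑ z ∈ Finset.univ.erase z0, Ps z * Real.log (Ps z / Q z)) + t * C := by
    have h1 : ∀ z ∈ Finset.univ.erase z0,
        Pt z * Real.log (Pt z / Q z) ≤ (1-t) * (Ps z * Real.log (Ps z / Q z))
          + t * (P z * Real.log (P z / Q z)) :=
      fun z _ => convex_ineq (hPs.1 z) (hP.1 z).le (hQ.1 z) ht0.le (by linarith)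
    calc ∑ z ∈ Finset.univ.erase z0, Pt z * Real.log (Pt z / Q z)
        ≤ ∑ z ∈ Finset.univ.erase z0, ((1-t) * (Ps z * Real.log (Ps z / Q z))
            + t * (P z * Real.log (P z / Q z))) := Finset.sum_le_sum h1
      _ = (∑ z ∈ Finset.univ.erase z0, Ps z * Real.log (Ps z / Q z)) + t * C := by
          rw [hC, Finset.mul_sum, ← Finset.sum_add_distrib]
          exact Finset.sum_congr rfl fun z _ => by ring
  have hlt : relEnt Pt Q < relEnt Ps Q := by
    rw [hsplitPs, hsplitPt, hterm0, hz0]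
    have h2 : t * (P z0 * Real.log t + P z0 * L0) ≤ t * (-(C + P z0 * L0 + 1) + P z0 * L0) :=
      mul_le_mul_of_nonneg_left (by linarith) ht0.le
    nlinarith
  linarith
lemma quad_eq [Nonempty X] [Nonempty Y] {P Q Ps : X × Y → ℝ} (hQ : IsPos Q) (hPs : IsPos Ps)
    (hmX : margX Ps = margX P) (hmY : margY Ps = margY P)
    (hle : ∀ P' : X × Y → ℝ, IsDist P' → margX P' = margX P → margY P' = margY P →
      relEnt Ps Q ≤ relEnt P' Q)
    (x x0 : X) (y y0 : Y) (hx : x ≠ x0) (hy : y ≠ y0) :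
    Real.log (Ps (x,y) / Q (x,y)) + Real.log (Ps (x0,y0) / Q (x0,y0))
      = Real.log (Ps (x,y0) / Q (x,y0)) + Real.log (Ps (x0,y) / Q (x0,y)) := by
  set u : X → ℝ := fun a => (if a = x then (1:ℝ) else 0) - (if a = x0 then 1 else 0) with hu
  set v : Y → ℝ := fun b => (if b = y then (1:ℝ) else 0) - (if b = y0 then 1 else 0) with hv
  set e : X × Y → ℝ := fun z => u z.1 * v z.2 with he
  have hsumu : ∑ a : X, u a = 0 := by
    simp [hu, Finset.sum_sub_distrib]
  have hsumv : ∑ b : Y, v b = 0 := by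
    simp [hv, Finset.sum_sub_distrib]
  have hub : ∀ a, |u a| ≤ 1 := by
    intro a
    simp only [hu]
    rcases eq_or_ne a x with h1 | h1 <;> rcases eq_or_ne a x0 with h2 | h2 <;>
      simp [h1, h2, hx, Ne.symm hx] <;> norm_num
  have hvb : ∀ b, |v b| ≤ 1 := by
    intro b
    simp only [hv]
    rcases eq_or_ne b y with h1 | h1 <;> rcases eq_or_ne b y0 with h2 | h2 <;>
      simp [h1, h2, hy, Ne.symm hy] <;> norm_num
  have heb : ∀ z, |e z| ≤ 1 := by
    intro z
    rw [he, abs_mul]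
    exact mul_le_one₀ (hub z.1) (abs_nonneg _) (hvb z.2)
  have hrow : ∀ a : X, ∑ b : Y, e (a, b) = 0 := by
    intro a
    simp only [he]
    rw [← Finset.mul_sum, hsumv, mul_zero]
  have hcol : ∀ b : Y, ∑ a : X, e (a, b) = 0 := by
    intro b
    simp only [he]
    rw [← Finset.sum_mul, hsumu, zero_mul]
  have hsume : ∑ z : X × Y, e z = 0 := by
    rw [Fintype.sum_prod_type]
    simp [hrow]
  -- epsilon
  have hne : (Finset.univ : Finset (X × Y)).Nonempty := Finset.univ_nonempty
  set ε : ℝ := Finset.univ.inf' hne Ps with hε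
  have hεpos : 0 < ε := by
    obtain ⟨z, _, hz⟩ := Finset.exists_mem_eq_inf' hne Ps
    rw [hε, hz]; exact hPs.1 z
  have hεle : ∀ z, ε ≤ Ps z := fun z => Finset.inf'_le _ (Finset.mem_univ z)
  set f : ℝ → ℝ := fun t => ∑ z : X × Y, (Ps z + t * e z) * Real.log ((Ps z + t * e z) / Q z)
    with hf
  have hf0 : f 0 = relEnt Ps Q := by simp [hf, relEnt]
  -- local min
  have hmin : IsLocalMin f 0 := by
    have hball : Metric.ball (0:ℝ) ε ∈ nhds (0:ℝ) := Metric.ball_mem_nhds 0 hεpos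
    filter_upwards [hball] with t ht
    rw [Metric.mem_ball, Real.dist_eq, sub_zero] at ht
    set Pt : X × Y → ℝ := fun z => Ps z + t * e z with hPt
    have hPtnn : ∀ z, 0 ≤ Pt z := by
      intro z
      have h1 : |t * e z| ≤ |t| := by
        rw [abs_mul]
        calc |t| * |e z| ≤ |t| * 1 := mul_le_mul_of_nonneg_left (heb z) (abs_nonneg t)
          _ = |t| := mul_one _
      have h2 : -|t| ≤ t * e z := by
        have := neg_abs_le (t * e z); linarith
      have h3 := hεle z
      simp only [hPt]
      linarith
    have hPtdist : IsDist Pt := by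
      refine ⟨hPtnn, ?_⟩
      simp only [hPt, Finset.sum_add_distrib, hPs.2, ← Finset.mul_sum, hsume, mul_zero, add_zero]
    have hPtX : margX Pt = margX P := by
      funext a
      simp only [margX, hPt, Finset.sum_add_distrib, ← Finset.mul_sum, hrow, mul_zero, add_zero]
      have : ∑ b : Y, Ps (a, b) = margX Ps a := rfl
      rw [this, hmX]
      rfl
    have hPtY : margY Pt = margY P := by
      funext b
      simp only [margY, hPt, Finset.sum_add_distrib, ← Finset.mul_sum, hcol, mul_zero, add_zero]
      have : ∑ a : X, Ps (a, b) = margY Ps b := rfl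
      rw [this, hmY]
      rfl
    have := hle Pt hPtdist hPtX hPtY
    rw [hf0]
    exact this
  -- derivative
  have hD : HasDerivAt f (∑ z : X × Y, (e z * Real.log (Ps z / Q z) + e z)) 0 := by
    rw [hf]
    apply HasDerivAt.fun_sum
    intro z _
    have ha : 0 < Ps z := hPs.1 z
    have hq : 0 < Q z := hQ.1 z
    have h1 : HasDerivAt (fun t : ℝ => Ps z + t * e z) (e z) 0 := by
      simpa using ((hasDerivAt_id (0:ℝ)).mul_const (e z)).const_add (Ps z)
    have h2 : HasDerivAt (fun t : ℝ => (Ps z + t * e z) / Q z) (e z / Q z) 0 := h1.div_const _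
    have hne0 : (Ps z + 0 * e z) / Q z ≠ 0 := by
      simp only [zero_mul, add_zero]
      positivity
    have h3 := h2.log hne0
    have h4 : HasDerivAt (fun t => (Ps z + t * e z) * Real.log ((Ps z + t * e z) / Q z)) _ 0 := h1.mul h3
    refine h4.congr_deriv ?_
    simp only [zero_mul, add_zero]
    field_simp
  have hD0 : (∑ z : X × Y, (e z * Real.log (Ps z / Q z) + e z)) = 0 := by
    rw [← hD.deriv]
    exact hmin.deriv_eq_zero
  rw [Finset.sum_add_distrib, hsume, add_zero] at hD0
  -- evaluate the sum
  have heval : ∑ z : X × Y, e z * Real.log (Ps z / Q z)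
      = (Real.log (Ps (x,y) / Q (x,y)) - Real.log (Ps (x,y0) / Q (x,y0)))
        - (Real.log (Ps (x0,y) / Q (x0,y)) - Real.log (Ps (x0,y0) / Q (x0,y0))) := by
    rw [Fintype.sum_prod_type]
    have hinner : ∀ a : X, ∑ b : Y, e (a, b) * Real.log (Ps (a,b) / Q (a,b))
        = u a * (Real.log (Ps (a,y) / Q (a,y)) - Real.log (Ps (a,y0) / Q (a,y0))) := by
      intro a
      simp only [he, hv, mul_assoc]
      rw [← Finset.mul_sum]
      congr 1
      simp [sub_mul, Finset.sum_sub_distrib]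
    simp only [hinner, hu, sub_mul, Finset.sum_sub_distrib]
    simp [hx]
  rw [heval] at hD0
  linarith

lemma key_lemma [Nonempty X] [Nonempty Y] {P Q Ps : X × Y → ℝ}
    (hP : IsPos P) (hQ : IsPos Q) (hPs : IsDist Ps)
    (hmX : margX Ps = margX P) (hmY : margY Ps = margY P)
    (hmin : relEnt Ps Q = projE P Q) :
    IsPos Ps ∧ SameCorr Ps Q ∧ relEnt P Q = relEnt P Ps + relEnt Ps Q := by
  have hpos : IsPos Ps := minimizer_pos hP hQ hPs hmX hmY hmin
  have hle : ∀ P' : X × Y → ℝ, IsDist P' → margX P' = margX P → margY P' = margY P →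
      relEnt Ps Q ≤ relEnt P' Q := fun P' h1 h2 h3 => hmin ▸ projE_le hQ h1 h2 h3
  set L : X × Y → ℝ := fun z => Real.log (Ps z / Q z) with hL
  obtain ⟨x0⟩ := ‹Nonempty X›
  obtain ⟨y0⟩ := ‹Nonempty Y›
  have hcorr : SameCorr Ps Q := by
    refine ⟨fun x => L (x, y0) - L (x0, y0), fun y => L (x0, y), ?_⟩
    intro x y
    rcases eq_or_ne x x0 with hx | hx
    · subst hx; simp [hL]
    rcases eq_or_ne y y0 with hy | hy
    · subst hy; simp [hL]
    have := quad_eq hQ hpos hmX hmY hle x x0 y y0 hx hy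
    simp only [hL]
    linarith [this]
  obtain ⟨a1, a2, ha⟩ := hcorr
  refine ⟨hpos, ⟨a1, a2, ha⟩, ?_⟩
  -- Pythagorean identity
  have hsplit : ∀ z : X × Y, Real.log (P z / Q z)
      = Real.log (P z / Ps z) + Real.log (Ps z / Q z) := by
    intro z
    have h1 : P z / Q z = (P z / Ps z) * (Ps z / Q z) := by
      rw [div_mul_div_comm, mul_comm (P z) (Ps z), mul_div_mul_left _ _ (hpos.1 z).ne']
    rw [h1, Real.log_mul (div_pos (hP.1 z) (hpos.1 z)).ne' (div_pos (hpos.1 z) (hQ.1 z)).ne']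
  have hL2 : ∀ z : X × Y, Real.log (Ps z / Q z) = a1 z.1 + a2 z.2 := fun z => ha z.1 z.2
  have hsum1 : ∀ R : X × Y → ℝ, ∑ z : X × Y, R z * (a1 z.1 + a2 z.2)
      = (∑ a : X, margX R a * a1 a) + (∑ b : Y, margY R b * a2 b) := by
    intro R
    have e1 : ∑ z : X × Y, R z * a1 z.1 = ∑ a : X, margX R a * a1 a := by
      rw [Fintype.sum_prod_type]
      exact Finset.sum_congr rfl fun a _ => by rw [margX, Finset.sum_mul]
    have e2 : ∑ z : X × Y, R z * a2 z.2 = ∑ b : Y, margY R b * a2 b := by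
      rw [Fintype.sum_prod_type_right]
      exact Finset.sum_congr rfl fun b _ => by rw [margY, Finset.sum_mul]
    calc ∑ z : X × Y, R z * (a1 z.1 + a2 z.2)
        = (∑ z : X × Y, R z * a1 z.1) + ∑ z : X × Y, R z * a2 z.2 := by
          rw [← Finset.sum_add_distrib]
          exact Finset.sum_congr rfl fun z _ => by ring
      _ = _ := by rw [e1, e2]
  have hPsum : ∑ z : X × Y, P z * Real.log (Ps z / Q z) = relEnt Ps Q := by
    calc ∑ z : X × Y, P z * Real.log (Ps z / Q z)
        = ∑ z : X × Y, P z * (a1 z.1 + a2 z.2) := by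
          exact Finset.sum_congr rfl fun z _ => by rw [hL2]
      _ = (∑ a : X, margX P a * a1 a) + (∑ b : Y, margY P b * a2 b) := hsum1 P
      _ = (∑ a : X, margX Ps a * a1 a) + (∑ b : Y, margY Ps b * a2 b) := by rw [hmX, hmY]
      _ = ∑ z : X × Y, Ps z * (a1 z.1 + a2 z.2) := (hsum1 Ps).symm
      _ = relEnt Ps Q := by
          exact Finset.sum_congr rfl fun z _ => by rw [← hL2]
  calc relEnt P Q = ∑ z : X × Y, (P z * Real.log (P z / Ps z)
        + P z * Real.log (Ps z / Q z)) := by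
        unfold relEnt
        exact Finset.sum_congr rfl fun z _ => by rw [hsplit z]; ring
    _ = relEnt P Ps + ∑ z : X × Y, P z * Real.log (Ps z / Q z) := by
        rw [Finset.sum_add_distrib]; rfl
    _ = relEnt P Ps + relEnt Ps Q := by rw [hPsum]


/-- minimizers of the projected relative entropy are positive, lie in
the exponential family, and satisfy the Pythagorean identity. -/
theorem projE_minimizer_properties
    [Nonempty X] [Nonempty Y]
    (P Q : X × Y → ℝ) (hP : IsPos P) (hQ : IsPos Q) :
    (∀ Ps : X × Y → ℝ, IsDist Ps → margX Ps = margX P → margY Ps = margY P →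
        relEnt Ps Q = projE P Q →
      IsPos Ps ∧ SameCorr Ps Q ∧ relEnt P Q = relEnt P Ps + relEnt Ps Q) ∧
    (∀ Qs : X × Y → ℝ, IsDist Qs → margX Qs = margX Q → margY Qs = margY Q →
        relEnt Qs P = projE Q P →
      IsPos Qs ∧ SameCorr Qs P ∧ relEnt Q P = relEnt Q Qs + relEnt Qs P) :=
  ⟨fun Ps h1 h2 h3 h4 => key_lemma hP hQ h1 h2 h3 h4,
   fun Qs h1 h2 h3 h4 => key_lemma hQ hP h1 h2 h3 h4⟩
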